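/- Let A = ℤ[x,y]/⟨x^n - 1⟩. Then A is a free ℤ-module, and the free commutative ring on the classes of indecomposables {V(i,l) : i ∈ ℤ/n, l ≥ 0} with multiplication [V(i,l)]·[V(j,m)] determined by the rules [V(1,0)]·[V(i,l)] = [V(i+1,l)], [V(1,0)]^n = [V(0,0)] = 1, and [V(0,1)]·[V(0,l)] = [V(0,l+1)] + [V(1,l-1)] for l ≥ 1, is isomorphic to A via x ↦ [V(1,0)], y ↦ [V(0,1)]; under this isomorphism [V(i,k)] corresponds to x^i f_k(x,y). -/

import Mathlib

/-- Generalized Fibonacci polynomials in ℤ[x,y] (x = X 0, y = X 1):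
f_0 = 1, f_1 = y, f_k = y·f_{k-1} - x·f_{k-2}. -/
noncomputable def f2 : ℕ → MvPolynomial (Fin 2) ℤ
  | 0 => 1
  | 1 => MvPolynomial.X 1
  | k + 2 => MvPolynomial.X 1 * f2 (k + 1) - MvPolynomial.X 0 * f2 k

section F2part
open MvPolynomial Finset

lemma f2_two (k : ℕ) : f2 (k+2) = X 1 * f2 (k+1) - X 0 * f2 k := rfl

lemma yf (k : ℕ) : X 1 * f2 (k+1) = f2 (k+2) + X 0 * f2 k := by
  rw [f2_two]; ring

lemma f2_mul_le : ∀ m l, m ≤ l → f2 l * f2 m = ∑ t ∈ range (m+1), X 0 ^ t * f2 (l + m - 2*t) := by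
  intro m
  induction m using Nat.strong_induction_on with
  | _ m ih =>
    match m with
    | 0 => intro l _; simp [f2]
    | 1 =>
      intro l hl
      obtain ⟨l', rfl⟩ : ∃ l', l = l' + 1 := ⟨l-1, by omega⟩
      rw [Finset.sum_range_succ, Finset.sum_range_one]
      have h1 : l' + 1 + 1 - 2*1 = l' := by omega
      have h2 : l' + 1 + 1 - 2*0 = l' + 2 := by omega
      rw [h1, h2]
      show f2 (l'+1) * X 1 = _
      rw [mul_comm, yf l']
      ring
    | (k+2) =>
      intro l hl
      have ih1 := ih (k+1) (by omega) l (by omega)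
      have ih0 := ih k (by omega) l (by omega)
      rw [f2_two, mul_sub, mul_comm (f2 l) (X 1 * _), mul_assoc,
          mul_comm (f2 (k+1)) (f2 l), ih1,
          mul_comm (f2 l) (X 0 * _), mul_assoc, mul_comm (f2 k) (f2 l), ih0,
          Finset.mul_sum, Finset.mul_sum]
      have key : ∀ t ∈ range (k+2),
          X 1 * (X 0 ^ t * f2 (l + (k+1) - 2*t)) =
          X 0 ^ t * f2 (l + (k+2) - 2*t) + X 0 ^ (t+1) * f2 (l + k - 2*t) := by
        intro t ht
        simp only [Finset.mem_range] at ht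
        have h1 : l + (k+1) - 2*t = (l + k - 2*t) + 1 := by omega
        have h2 : l + (k+2) - 2*t = (l + k - 2*t) + 2 := by omega
        rw [h1, h2, mul_left_comm (X 1) (X 0 ^ t), yf]
        ring
      rw [Finset.sum_congr rfl key, Finset.sum_add_distrib]
      have split2 : ∑ t ∈ range (k+2), X 0 ^ (t+1) * f2 (l + k - 2*t)
          = (∑ t ∈ range (k+1), X 0 * (X 0 ^ t * f2 (l + k - 2*t)))
            + X 0 ^ (k+2) * f2 (l + (k+2) - 2*(k+2)) := by
        rw [Finset.sum_range_succ]
        congr 1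
        · exact Finset.sum_congr rfl (fun t _ => by ring)
        · congr 2
          omega
      rw [split2]
      rw [show ((k+2):ℕ)+1 = (k+2)+1 from rfl,
          Finset.sum_range_succ (fun t => X 0 ^ t * f2 (l + (k+2) - 2*t)) (k+2)]
      abel

lemma f2_mul (l m : ℕ) : f2 l * f2 m = ∑ t ∈ range (min l m + 1), X 0 ^ t * f2 (l + m - 2*t) := by
  rcases le_total m l with h | h
  · rw [min_eq_right h]; exact f2_mul_le m l h
  · rw [min_eq_left h, mul_comm, add_comm l m]; exact f2_mul_le l m h

end F2part


section FTpart
open Polynomial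

abbrev Bn (n : ℕ) := AddMonoidAlgebra ℤ (ZMod n)

noncomputable def gx (n : ℕ) : Bn n := AddMonoidAlgebra.single 1 1

noncomputable def ft (n : ℕ) : ℕ → Polynomial (Bn n)
  | 0 => 1
  | 1 => X
  | k + 2 => X * ft n (k+1) - C (gx n) * ft n k

lemma ft_two (n k : ℕ) : ft n (k+2) = X * ft n (k+1) - C (gx n) * ft n k := rfl

lemma ft_monic (n : ℕ) : ∀ k, (ft n k).Monic ∧ (ft n k).natDegree = k := by
  intro k
  induction k using Nat.strong_induction_on with
  | _ k ih =>
    match k with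
    | 0 => exact ⟨monic_one, natDegree_one⟩
    | 1 => exact ⟨monic_X, natDegree_X⟩
    | (k+2) =>
      obtain ⟨h1m, h1d⟩ := ih (k+1) (by omega)
      obtain ⟨h0m, h0d⟩ := ih k (by omega)
      have hm : (X * ft n (k+1)).Monic := monic_X.mul h1m
      have hd : (X * ft n (k+1)).natDegree = k+2 := by
        rw [natDegree_X_mul h1m.ne_zero, h1d]
      have hlt : (C (gx n) * ft n k).natDegree < (X * ft n (k+1)).natDegree := by
        rw [hd]
        calc (C (gx n) * ft n k).natDegree ≤ (C (gx n)).natDegree + (ft n k).natDegree :=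
              natDegree_mul_le
        _ < k + 2 := by rw [natDegree_C, h0d]; omega
      refine ⟨?_, ?_⟩
      · rw [ft_two]; exact hm.sub_of_left (degree_lt_degree hlt)
      · rw [ft_two, natDegree_sub_eq_left_of_natDegree_lt hlt, hd]

lemma ft_coeff_eq_zero (n k j : ℕ) (h : k < j) : (ft n k).coeff j = 0 :=
  coeff_eq_zero_of_natDegree_lt (by rw [(ft_monic n k).2]; exact h)

lemma ft_coeff_self (n k : ℕ) : (ft n k).coeff k = 1 := by
  have := (ft_monic n k).1
  rw [Polynomial.Monic, Polynomial.leadingCoeff, (ft_monic n k).2] at this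
  exact this

lemma ft_span (n : ℕ) : ∀ (N : ℕ) (p : Polynomial (Bn n)), p.degree < (N : WithBot ℕ) →
    p ∈ Submodule.span (Bn n) (Set.range (ft n)) := by
  intro N
  induction N with
  | zero =>
    intro p hp
    have : p = 0 := by
      rw [← Polynomial.degree_eq_bot]
      exact Nat.WithBot.lt_zero_iff.mp (by exact_mod_cast hp)
    simp [this]
  | succ N ihN =>
    intro p hp
    by_cases h0 : p = 0
    · simp [h0]
    · set q := p - p.leadingCoeff • ft n p.natDegree with hq
      have hnd : p.natDegree ≤ N := by
        have := (natDegree_lt_iff_degree_lt h0).mpr (by exact_mod_cast hp)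
        omega
      have hcoe : ∀ m, p.natDegree ≤ m → q.coeff m = 0 := by
        intro m hm
        rw [hq, Polynomial.coeff_sub, Polynomial.coeff_smul]
        rcases eq_or_lt_of_le hm with rfl | hml
        · rw [Polynomial.coeff_natDegree, ft_coeff_self]
          simp
        · rw [Polynomial.coeff_eq_zero_of_natDegree_lt hml,
              ft_coeff_eq_zero n _ _ hml]
          simp
      have hqd : q.degree < (N : WithBot ℕ) :=
        (Polynomial.degree_lt_iff_coeff_zero q N).mpr (fun m hm => hcoe m (le_trans hnd hm))
      have hqmem := ihN q hqd
      have : p = q + p.leadingCoeff • ft n p.natDegree := by rw [hq]; ring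
      rw [this]
      exact Submodule.add_mem _ hqmem
        (Submodule.smul_mem _ _ (Submodule.subset_span ⟨p.natDegree, rfl⟩))

lemma ft_li (n : ℕ) : LinearIndependent (Bn n) (ft n) := by
  rw [linearIndependent_iff]
  intro c hc
  by_contra hne
  have hsupp : c.support.Nonempty := Finsupp.support_nonempty_iff.mpr hne
  set K := c.support.max' hsupp with hK
  have hKmem : K ∈ c.support := c.support.max'_mem hsupp
  have : (Finsupp.linearCombination (Bn n) (ft n) c).coeff K = c K := by
    rw [Finsupp.linearCombination_apply, Finsupp.sum]
    rw [Polynomial.finset_sum_coeff]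
    rw [Finset.sum_eq_single K]
    · rw [Polynomial.coeff_smul, ft_coeff_self, smul_eq_mul, mul_one]
    · intro b hb hbK
      rw [Polynomial.coeff_smul,
        ft_coeff_eq_zero n b K (lt_of_le_of_ne (c.support.le_max' b hb) hbK), smul_zero]
    · intro h; exact absurd hKmem h
  rw [hc] at this
  simp only [Polynomial.coeff_zero] at this
  exact (Finsupp.mem_support_iff.mp hKmem) this.symm

noncomputable def ftBasis (n : ℕ) : Module.Basis ℕ (Bn n) (Polynomial (Bn n)) :=
  Module.Basis.mk (ft_li n) (by
    intro p _
    exact ft_span n (p.natDegree + 1) p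
      (Polynomial.degree_lt_iff_coeff_zero p _ |>.mpr
        (fun m hm => Polynomial.coeff_eq_zero_of_natDegree_lt (by omega))))

lemma ftBasis_repr (n : ℕ) (b : Bn n) (k : ℕ) :
    (ftBasis n).repr (C b * ft n k) = Finsupp.single k b := by
  rw [← Polynomial.smul_eq_C_mul, ← Module.Basis.mk_apply (ft_li n) _ k]
  show (ftBasis n).repr (b • ftBasis n k) = _
  rw [map_smul, Module.Basis.repr_self, Finsupp.smul_single, smul_eq_mul, mul_one]

end FTpart

section RingIso
open MvPolynomial

variable (n : ℕ) [NeZero n]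

noncomputable abbrev An (n : ℕ) := MvPolynomial (Fin 2) ℤ ⧸
  Ideal.span {(X 0 : MvPolynomial (Fin 2) ℤ) ^ n - 1}

noncomputable def xA : An n := Ideal.Quotient.mk _ (X 0)
noncomputable def yA : An n := Ideal.Quotient.mk _ (X 1)

lemma xA_pow_n : (xA n) ^ n = 1 := by
  show (Ideal.Quotient.mk _ (X 0)) ^ n = 1
  rw [← map_pow, show (1 : An n) = Ideal.Quotient.mk _ 1 from (map_one _).symm,
    Ideal.Quotient.eq]
  exact Ideal.subset_span rfl

lemma xA_pow_val (a : ℕ) : (xA n) ^ ((a : ZMod n)).val = (xA n) ^ a := by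
  rw [ZMod.val_natCast, ← pow_eq_pow_mod a (xA_pow_n n)]

lemma gx_pow (i : ℕ) : (gx n) ^ i = AddMonoidAlgebra.single ((i : ZMod n)) 1 := by
  rw [gx, AddMonoidAlgebra.single_pow, one_pow, nsmul_eq_mul, mul_one]

/-- The monoid hom from `Multiplicative (ZMod n)` to the units-like powers of xA. -/
noncomputable def gA : Multiplicative (ZMod n) →* An n where
  toFun := fun i => (xA n) ^ (Multiplicative.toAdd i).val
  map_one' := by simp [ZMod.val_zero]
  map_mul' := by
    intro i j
    show (xA n) ^ ((Multiplicative.toAdd i + Multiplicative.toAdd j).val) = _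
    rw [ZMod.val_add, ← pow_eq_pow_mod _ (xA_pow_n n), pow_add]

noncomputable def algB : Bn n →ₐ[ℤ] An n :=
  AddMonoidAlgebra.lift ℤ (An n) (ZMod n) (gA n)

noncomputable def Phi : MvPolynomial (Fin 2) ℤ →+* Polynomial (Bn n) :=
  eval₂Hom (Int.castRingHom _) ![Polynomial.C (gx n), Polynomial.X]

lemma Phi_rel : Phi n ((X 0 : MvPolynomial (Fin 2) ℤ) ^ n - 1) = 0 := by
  rw [map_sub, map_pow, map_one]
  rw [show Phi n (X 0) = Polynomial.C (gx n) from eval₂Hom_X' _ _ 0]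
  rw [← map_pow, gx_pow, ZMod.natCast_self, ← AddMonoidAlgebra.one_def, map_one, sub_self]

noncomputable def PhiQ : An n →+* Polynomial (Bn n) :=
  Ideal.Quotient.lift _ (Phi n) (by
    intro a ha
    rw [Ideal.mem_span_singleton] at ha
    obtain ⟨c, rfl⟩ := ha
    rw [map_mul, Phi_rel, zero_mul])

noncomputable def Psi : Polynomial (Bn n) →+* An n :=
  Polynomial.eval₂RingHom (algB n).toRingHom (yA n)

lemma Psi_PhiQ : (Psi n).comp (PhiQ n) = RingHom.id (An n) := by
  apply Ideal.Quotient.ringHom_ext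
  apply MvPolynomial.ringHom_ext
  · intro r
    simp [PhiQ, Phi, Psi]
  · intro i
    fin_cases i
    · show (Psi n) ((PhiQ n) (Ideal.Quotient.mk _ (X 0))) = Ideal.Quotient.mk _ (X 0)
      rw [show (PhiQ n) (Ideal.Quotient.mk _ (X 0)) = Phi n (X 0) from rfl,
        show Phi n (X 0) = Polynomial.C (gx n) from eval₂Hom_X' _ _ 0]
      show Polynomial.eval₂ _ _ _ = _
      rw [Polynomial.eval₂_C]
      show (algB n) (gx n) = _
      rw [gx, algB, AddMonoidAlgebra.lift_single, one_smul]
      show (xA n) ^ (Multiplicative.toAdd (Multiplicative.ofAdd (1 : ZMod n))).val = _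
      rw [toAdd_ofAdd, show ((1 : ZMod n)) = ((1 : ℕ) : ZMod n) by push_cast; ring,
        xA_pow_val n 1, pow_one]
      rfl
    · show (Psi n) ((PhiQ n) (Ideal.Quotient.mk _ (X 1))) = Ideal.Quotient.mk _ (X 1)
      rw [show (PhiQ n) (Ideal.Quotient.mk _ (X 1)) = Phi n (X 1) from rfl,
        show Phi n (X 1) = Polynomial.X from eval₂Hom_X' _ _ 1]
      show Polynomial.eval₂ _ _ _ = _
      rw [Polynomial.eval₂_X]
      rfl

lemma PhiQ_Psi : (PhiQ n).comp (Psi n) = RingHom.id (Polynomial (Bn n)) := by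
  apply Polynomial.ringHom_ext
  · intro b
    show (PhiQ n) ((Psi n) (Polynomial.C b)) = Polynomial.C b
    rw [show (Psi n) (Polynomial.C b) = (algB n) b from Polynomial.eval₂_C _ _]
    -- now ring hom ext on Bn n
    have : (PhiQ n).comp ((algB n).toRingHom) = Polynomial.C.comp (RingHom.id (Bn n)) := by
      apply AddMonoidAlgebra.ringHom_ext
      · intro z
        show (PhiQ n) ((algB n) (AddMonoidAlgebra.single 0 z)) = _
        rw [algB, AddMonoidAlgebra.lift_single]
        simp only [gA, MonoidHom.coe_mk, OneHom.coe_mk, toAdd_ofAdd, ZMod.val_zero, pow_zero,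
          zsmul_eq_mul, mul_one, RingHom.coe_comp, Function.comp_apply, RingHom.id_apply]
        rw [show (AddMonoidAlgebra.single (0 : ZMod n) z : Bn n) = (z : Bn n) from rfl,
          map_intCast, map_intCast]
      · intro a
        show (PhiQ n) ((algB n) (AddMonoidAlgebra.single a 1)) = _
        rw [algB, AddMonoidAlgebra.lift_single, one_smul]
        show (PhiQ n) ((xA n) ^ (Multiplicative.toAdd (Multiplicative.ofAdd a)).val) = _
        rw [toAdd_ofAdd, map_pow]
        rw [show (PhiQ n) (xA n) = Polynomial.C (gx n) from eval₂Hom_X' _ _ 0]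
        rw [← map_pow, gx_pow, ZMod.natCast_rightInverse a]
        simp
    exact DFunLike.congr_fun this b
  · show (PhiQ n) ((Psi n) Polynomial.X) = Polynomial.X
    rw [show (Psi n) Polynomial.X = yA n from Polynomial.eval₂_X _ _]
    exact eval₂Hom_X' _ _ 1

noncomputable def e0 (n : ℕ) [NeZero n] : An n ≃+* Polynomial (Bn n) :=
  RingEquiv.ofRingHom (PhiQ n) (Psi n) (PhiQ_Psi n) (Psi_PhiQ n)

end RingIso

section Assemble
open MvPolynomial

variable (n : ℕ) [NeZero n]

lemma PhiQ_f2 : ∀ k, PhiQ n (Ideal.Quotient.mk _ (f2 k)) = ft n k := by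
  intro k
  induction k using Nat.strong_induction_on with
  | _ k ih =>
    match k with
    | 0 => show Phi n 1 = 1; rw [map_one]
    | 1 => show Phi n (X 1) = Polynomial.X; exact eval₂Hom_X' _ _ 1
    | (k+2) =>
      show Phi n (f2 (k+2)) = ft n (k+2)
      rw [f2_two, ft_two, map_sub, map_mul, map_mul,
        show Phi n (X 1) = Polynomial.X from eval₂Hom_X' _ _ 1,
        show Phi n (X 0) = Polynomial.C (gx n) from eval₂Hom_X' _ _ 0,
        show Phi n (f2 (k+1)) = PhiQ n (Ideal.Quotient.mk _ (f2 (k+1))) from rfl,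
        show Phi n (f2 k) = PhiQ n (Ideal.Quotient.mk _ (f2 k)) from rfl,
        ih (k+1) (by omega), ih k (by omega)]

lemma PhiQ_elem (i k : ℕ) :
    PhiQ n (Ideal.Quotient.mk _ (X 0 ^ i * f2 k)) = Polynomial.C ((gx n)^i) * ft n k := by
  show Phi n (X 0 ^ i * f2 k) = _
  rw [map_mul, map_pow, show Phi n (X 0) = Polynomial.C (gx n) from eval₂Hom_X' _ _ 0,
    show Phi n (f2 k) = PhiQ n (Ideal.Quotient.mk _ (f2 k)) from rfl, PhiQ_f2, ← map_pow]

noncomputable def eB (n : ℕ) : Bn n ≃ₗ[ℤ] (ZMod n →₀ ℤ) := AddMonoidAlgebra.coeffLinearEquiv ℤ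

lemma eB_single (a : ZMod n) (z : ℤ) :
    eB n (AddMonoidAlgebra.single a z) = Finsupp.single a z := rfl

lemma prod_symm_single {α β : Type*} (a : α) (b : β) (z : ℤ) :
    (Finsupp.finsuppProdLEquiv (α := α) (β := β) ℤ).symm
      (Finsupp.single a (Finsupp.single b z)) = Finsupp.single (a,b) z := by
  classical
  ext ⟨x, y⟩
  rw [Finsupp.finsuppProdLEquiv, Finsupp.curryLinearEquiv_symm_apply_apply]
  simp only [Finsupp.single_apply, Prod.mk.injEq, ite_and]
  split_ifs <;> simp_all

noncomputable def eFull (n : ℕ) [NeZero n] : An n ≃ₗ[ℤ] ((ZMod n × ℕ) →₀ ℤ) :=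
  (e0 n).toAddEquiv.toIntLinearEquiv ≪≫ₗ
  ((ftBasis n).repr.restrictScalars ℤ) ≪≫ₗ
  (Finsupp.mapRange.linearEquiv (eB n)) ≪≫ₗ
  (Finsupp.finsuppProdLEquiv ℤ).symm ≪≫ₗ
  (Finsupp.domLCongr (Equiv.prodComm ℕ (ZMod n)))

lemma eFull_apply (i k : ℕ) :
    eFull n (Ideal.Quotient.mk _ (X 0 ^ i * f2 k)) = Finsupp.single ((i : ZMod n), k) 1 := by
  have h0 : (e0 n) (Ideal.Quotient.mk _ (X 0 ^ i * f2 k)) = Polynomial.C ((gx n)^i) * ft n k :=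
    PhiQ_elem n i k
  simp only [eFull, LinearEquiv.trans_apply]
  rw [show ((e0 n).toAddEquiv.toIntLinearEquiv) (Ideal.Quotient.mk _ (X 0 ^ i * f2 k))
        = Polynomial.C ((gx n)^i) * ft n k from h0,
    show (((ftBasis n).repr.restrictScalars ℤ)) (Polynomial.C ((gx n)^i) * ft n k)
        = Finsupp.single k ((gx n)^i) from ftBasis_repr n _ k,
    Finsupp.mapRange.linearEquiv_apply, Finsupp.mapRange_single,
    gx_pow,
    eB_single n,
    prod_symm_single, Finsupp.domLCongr_single]
  rfl

lemma eFull_symm_single (c : ZMod n) (d : ℕ) :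
    (eFull n).symm (Finsupp.single (c, d) 1) =
      Ideal.Quotient.mk _ (X 0 ^ (c.val) * f2 d) := by
  rw [LinearEquiv.symm_apply_eq, eFull_apply, ZMod.natCast_rightInverse c]

end Assemble


open MvPolynomial Finset in
/-- A = ℤ[x,y]/⟨x^n - 1⟩ is a free ℤ-module; it is isomorphic to
the Green ring of the cyclic quiver (free abelian group on [V(i,l)],
i ∈ ℤ/n, l ∈ ℕ, with product [V(i,l)]·[V(j,m)] = Σ_{t=0}^{min(l,m)}
[V(i+j+t, l+m-2t)]) via x ↦ [V(1,0)], y ↦ [V(0,1)], under which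
x^i f_k(x,y) ↦ [V(i,k)].  We encode the Green ring as the free ℤ-module
(ZMod n × ℕ) →₀ ℤ with [V(i,l)] = single (i,l) 1, and record that the linear
isomorphism sends x^i f_k to [V(i,k)] and transports multiplication to the
Clebsch–Gordan rule. -/
theorem green_ring_cyclic_q_one (n : ℕ) (hn : 1 ≤ n) :
    ∃ e : (MvPolynomial (Fin 2) ℤ ⧸
            Ideal.span {(X 0 : MvPolynomial (Fin 2) ℤ) ^ n - 1}) ≃ₗ[ℤ]
          ((ZMod n × ℕ) →₀ ℤ),
      (∀ (i k : ℕ),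
        e (Ideal.Quotient.mk _ (X 0 ^ i * f2 k)) = Finsupp.single ((i : ZMod n), k) 1) ∧
      (∀ (i j : ZMod n) (l m : ℕ),
        e.symm (Finsupp.single (i, l) 1) * e.symm (Finsupp.single (j, m) 1) =
          e.symm (∑ t ∈ Finset.range (min l m + 1),
            Finsupp.single (i + j + (t : ZMod n), l + m - 2 * t) 1)) := by
  haveI : NeZero n := ⟨by omega⟩
  refine ⟨eFull n, fun i k => eFull_apply n i k, fun i j l m => ?_⟩
  rw [map_sum, eFull_symm_single, eFull_symm_single]
  have hterm : ∀ t ∈ Finset.range (min l m + 1),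
      (eFull n).symm (Finsupp.single (i + j + (t : ZMod n), l + m - 2 * t) 1)
      = Ideal.Quotient.mk _ (X 0 ^ ((i + j + (t:ZMod n)).val) * f2 (l + m - 2 * t)) := by
    intro t _
    exact eFull_symm_single n _ _
  rw [Finset.sum_congr rfl hterm, ← map_mul]
  have hmul : (X 0 ^ (i.val) * f2 l) * (X 0 ^ (j.val) * f2 m)
      = X 0 ^ (i.val + j.val) * (f2 l * f2 m) := by ring
  rw [hmul, f2_mul, Finset.mul_sum, map_sum]
  refine Finset.sum_congr rfl (fun t _ => ?_)
  have harr : X 0 ^ (i.val + j.val) * (X 0 ^ t * f2 (l + m - 2*t))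
      = X 0 ^ (i.val + j.val + t) * f2 (l + m - 2*t) := by rw [pow_add, pow_add]; ring
  rw [harr]
  have h1 : Ideal.Quotient.mk (Ideal.span {(X 0 : MvPolynomial (Fin 2) ℤ) ^ n - 1})
      (X 0 ^ (i.val + j.val + t) * f2 (l + m - 2*t))
      = (xA n) ^ (i.val + j.val + t) * Ideal.Quotient.mk _ (f2 (l + m - 2*t)) := by
    rw [map_mul, map_pow]; rfl
  have h2 : Ideal.Quotient.mk (Ideal.span {(X 0 : MvPolynomial (Fin 2) ℤ) ^ n - 1})
      (X 0 ^ ((i + j + (t:ZMod n)).val) * f2 (l + m - 2*t))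
      = (xA n) ^ ((i + j + (t:ZMod n)).val) * Ideal.Quotient.mk _ (f2 (l + m - 2*t)) := by
    rw [map_mul, map_pow]; rfl
  rw [h1, h2]
  congr 1
  have hcast : ((i.val + j.val + t : ℕ) : ZMod n) = i + j + (t : ZMod n) := by
    push_cast
    rw [ZMod.natCast_rightInverse i, ZMod.natCast_rightInverse j]
  rw [← hcast, xA_pow_val]
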